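/- For constants λ > 0 and α > 1/2, the integral ∫₀^∞ e^{-2λu} u^{α-1} (τ+u)^{α-1} du equals (1/√π) Γ(α) (τ/(2λ))^{α-1/2} e^{λτ} K_{α-1/2}(λτ) for all τ > 0, where K_ν is the modified Bessel function of the second kind. -/

import Mathlib

open Real MeasureTheory

open Set

/-- Modified Bessel function of the second kind, via its integral representation. -/
noncomputable def besselK (ν x : ℝ) : ℝ :=
  ∫ t in Set.Ioi (0 : ℝ), Real.exp (-x * Real.cosh t) * Real.cosh (ν * t)


lemma chi_deriv (c y : ℝ) (hy : 0 < y) :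
    HasDerivAt (fun y : ℝ => c/(2*y)) (-(c/(2*y^2))) y := by
  have heq : (fun y : ℝ => c/(2*y)) = fun y : ℝ => c/2 * y⁻¹ := by
    funext z; ring
  rw [heq]
  have h := (hasDerivAt_inv (ne_of_gt hy)).const_mul (c/2)
  refine h.congr_deriv ?_
  ring

lemma exp_quad_measurable (c : ℝ) : Measurable fun y : ℝ => Real.exp (-y^2 - c^2/(4*y^2)) :=
  (((measurable_id.pow_const 2).neg).sub
    (measurable_const.div ((measurable_id.pow_const 2).const_mul 4))).exp

lemma glasser (c : ℝ) (hc : 0 < c) :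
    ∫ w in Ioi (0:ℝ), Real.exp (-w - c^2/(4*w)) * w ^ (-(1:ℝ)/2)
      = Real.sqrt π * Real.exp (-c) := by
  have key : ∀ y : ℝ, 0 < y →
      Real.exp (-(y - c/(2*y))^2) = Real.exp c * Real.exp (-y^2 - c^2/(4*y^2)) := by
    intro y hy
    rw [← Real.exp_add]
    congr 1
    have hy0 : y ≠ 0 := ne_of_gt hy
    field_simp
    ring
  set E : ℝ := ∫ y in Ioi (0:ℝ), Real.exp (-y^2 - c^2/(4*y^2)) with hE
  -- substitution χ : y ↦ c/(2 y), involution of Ioi 0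
  have hchi_img : (fun y : ℝ => c/(2*y)) '' Ioi 0 = Ioi 0 := by
    ext w; simp only [mem_image, mem_Ioi]
    constructor
    · rintro ⟨y, hy, rfl⟩; positivity
    · intro hw; exact ⟨c/(2*w), by positivity, by field_simp⟩
  have hchi : E = ∫ y in Ioi (0:ℝ), (c/(2*y^2)) * Real.exp (-y^2 - c^2/(4*y^2)) := by
    have him := integral_image_eq_integral_abs_deriv_smul (s := Ioi (0:ℝ))
      (f := fun y : ℝ => c/(2*y)) (f' := fun y : ℝ => -(c/(2*y^2)))
      measurableSet_Ioi
      (fun y hy => (chi_deriv c y (mem_Ioi.1 hy)).hasDerivWithinAt)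
      (fun a ha b hb hab => by
        have ha' := mem_Ioi.1 ha; have hb' := mem_Ioi.1 hb
        have h2 : c * (2*b) = c * (2*a) := by
          rw [div_eq_div_iff (by positivity) (by positivity)] at hab
          linarith
        have := mul_left_cancel₀ (ne_of_gt hc) h2
        linarith)
      (fun y : ℝ => Real.exp (-y^2 - c^2/(4*y^2)))
    rw [hchi_img] at him
    rw [hE, him]
    refine setIntegral_congr_fun measurableSet_Ioi (fun y hy => ?_)
    have hy' := mem_Ioi.1 hy
    have hy0 : (y:ℝ) ≠ 0 := ne_of_gt hy'
    rw [smul_eq_mul, abs_neg, abs_of_pos (by positivity)]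
    congr 1
    field_simp
    ring
  -- substitution ψ : y ↦ y - c/(2 y), from Ioi 0 onto ℝ
  have hpsi_img : (fun y : ℝ => y - c/(2*y)) '' Ioi 0 = univ := by
    refine eq_univ_of_forall (fun z => ?_)
    set s := Real.sqrt (z^2 + 2*c) with hs
    have hsq : s^2 = z^2 + 2*c := Real.sq_sqrt (by positivity)
    have h1 : |z| < s := by
      rw [hs, ← Real.sqrt_sq_eq_abs]
      exact Real.sqrt_lt_sqrt (sq_nonneg z) (by linarith)
    have hy : 0 < (z + s)/2 := by
      have := neg_abs_le z; linarith
    refine ⟨(z + s)/2, mem_Ioi.2 hy, ?_⟩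
    have hzs : z + s ≠ 0 := ne_of_gt (by linarith)
    field_simp
    nlinarith [hsq]
  have hmono : StrictMonoOn (fun y : ℝ => y - c/(2*y)) (Ioi 0) := by
    intro a ha b hb hlt
    have ha' := mem_Ioi.1 ha; have hb' := mem_Ioi.1 hb
    have : c/(2*b) < c/(2*a) := div_lt_div_of_pos_left hc (by positivity) (by linarith)
    simp only
    linarith
  have hpsi : Real.sqrt π * Real.exp (-c) = E + E := by
    have hgauss : ∫ z : ℝ, Real.exp (-z^2) = Real.sqrt π := by
      simpa using integral_gaussian 1
    have him := integral_image_eq_integral_abs_deriv_smul (s := Ioi (0:ℝ))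
      (f := fun y : ℝ => y - c/(2*y)) (f' := fun y : ℝ => 1 + c/(2*y^2))
      measurableSet_Ioi
      (fun y hy => by
        have hy' := mem_Ioi.1 hy
        have h := (hasDerivAt_id y).sub (chi_deriv c y hy')
        have : HasDerivAt (fun y : ℝ => y - c/(2*y)) (1 + c/(2*y^2)) y := by
          exact h.congr_deriv (by ring)
        exact this.hasDerivWithinAt)
      hmono.injOn
      (fun z : ℝ => Real.exp (-z^2))
    rw [hpsi_img, setIntegral_univ, hgauss] at him
    rw [him]
    have h1 : ∀ y ∈ Ioi (0:ℝ), |1 + c/(2*y^2)| • Real.exp (-(y - c/(2*y))^2)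
        = Real.exp c • (Real.exp (-y^2 - c^2/(4*y^2)) + (c/(2*y^2)) * Real.exp (-y^2 - c^2/(4*y^2))) := by
      intro y hy
      have hy' := mem_Ioi.1 hy
      rw [smul_eq_mul, smul_eq_mul, abs_of_pos (by positivity), key y hy']
      ring
    rw [setIntegral_congr_fun measurableSet_Ioi h1, integral_smul]
    have hf_int : IntegrableOn (fun y : ℝ => Real.exp (-y^2 - c^2/(4*y^2))) (Ioi 0) := by
      refine Integrable.mono' ((integrable_exp_neg_mul_sq one_pos).integrableOn) ?_ ?_
      · exact (exp_quad_measurable c).aestronglyMeasurable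
      · filter_upwards [ae_restrict_mem measurableSet_Ioi] with y hy
        have hy' := mem_Ioi.1 hy
        rw [Real.norm_eq_abs, abs_of_pos (Real.exp_pos _)]
        apply Real.exp_le_exp.2
        have : 0 ≤ c^2/(4*y^2) := by positivity
        nlinarith
    have hg_int : IntegrableOn (fun y : ℝ => (c/(2*y^2)) * Real.exp (-y^2 - c^2/(4*y^2))) (Ioi 0) := by
      refine Integrable.mono' (((integrable_exp_neg_mul_sq one_pos).integrableOn).const_mul (2/c)) ?_ ?_
      · exact ((measurable_const.div ((measurable_id.pow_const 2).const_mul 2)).mul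
          (exp_quad_measurable c)).aestronglyMeasurable
      · filter_upwards [ae_restrict_mem measurableSet_Ioi] with y hy
        have hy' := mem_Ioi.1 hy
        have hy0 : y ≠ 0 := ne_of_gt hy'
        rw [Real.norm_eq_abs, abs_of_pos (by positivity)]
        have hexp : Real.exp (-y^2 - c^2/(4*y^2)) = Real.exp (-y^2) * Real.exp (-(c^2/(4*y^2))) := by
          rw [← Real.exp_add]; ring_nf
        rw [hexp]
        have hb : Real.exp (-(c^2/(4*y^2))) ≤ 4*y^2/c^2 := by
          rw [Real.exp_neg]
          rw [inv_le_comm₀ (Real.exp_pos _) (by positivity)]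
          calc (4*y^2/c^2)⁻¹ = c^2/(4*y^2) := by rw [inv_div]
          _ ≤ Real.exp (c^2/(4*y^2)) := by
              have := Real.add_one_le_exp (c^2/(4*y^2)); linarith
        calc c/(2*y^2) * (Real.exp (-y^2) * Real.exp (-(c^2/(4*y^2))))
            ≤ c/(2*y^2) * (Real.exp (-y^2) * (4*y^2/c^2)) := by
              apply mul_le_mul_of_nonneg_left ?_ (by positivity)
              exact mul_le_mul_of_nonneg_left hb (le_of_lt (Real.exp_pos _))
          _ = 2/c * Real.exp (-1*y^2) := by field_simp; ring
    rw [integral_add hf_int hg_int, ← hchi, smul_eq_mul]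
    rw [mul_comm (Real.exp c), mul_assoc, ← Real.exp_add]
    simp
    exact hE.symm
  -- final substitution w = y^2
  have hsq_inj : InjOn (fun y : ℝ => y^2) (Ioi 0) := by
    intro a ha b hb hab
    have h := congrArg Real.sqrt hab
    rwa [Real.sqrt_sq (le_of_lt (mem_Ioi.1 ha)), Real.sqrt_sq (le_of_lt (mem_Ioi.1 hb))] at h
  have hsq_img : (fun y : ℝ => y^2) '' Ioi 0 = Ioi 0 := by
    ext w; simp only [mem_image, mem_Ioi]
    constructor
    · rintro ⟨y, hy, rfl⟩; positivity
    · intro hw; exact ⟨Real.sqrt w, Real.sqrt_pos.2 hw, Real.sq_sqrt (le_of_lt hw)⟩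
  have him := integral_image_eq_integral_abs_deriv_smul (s := Ioi (0:ℝ))
    (f := fun y : ℝ => y^2) (f' := fun y : ℝ => 2*y)
    measurableSet_Ioi
    (fun y hy => by
      have h := hasDerivAt_pow 2 y
      simpa using h.hasDerivWithinAt)
    hsq_inj
    (fun w : ℝ => Real.exp (-w - c^2/(4*w)) * w ^ (-(1:ℝ)/2))
  rw [hsq_img] at him
  rw [him]
  have h2 : ∀ y ∈ Ioi (0:ℝ), |2*y| • (Real.exp (-y^2 - c^2/(4*y^2)) * (y^2) ^ (-(1:ℝ)/2))
      = (2:ℝ) * Real.exp (-y^2 - c^2/(4*y^2)) := by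
    intro y hy
    have hy' := mem_Ioi.1 hy
    have hrp : ((y:ℝ)^2) ^ (-(1:ℝ)/2) = y⁻¹ := by
      rw [← Real.rpow_natCast y 2, ← Real.rpow_mul (le_of_lt hy')]
      norm_num [Real.rpow_neg_one]
    rw [smul_eq_mul, hrp, abs_of_pos (by positivity)]
    field_simp
  have h2' : ∀ y ∈ Ioi (0:ℝ), |2*y| • (Real.exp (-(y^2) - c^2/(4*(y^2))) * (y^2) ^ (-(1:ℝ)/2))
      = (2:ℝ) * Real.exp (-y^2 - c^2/(4*y^2)) := by
    intro y hy
    have := h2 y hy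
    convert this using 3 <;> ring_nf
  rw [setIntegral_congr_fun measurableSet_Ioi h2', integral_const_mul, ← hE]
  linarith [hpsi]

/-- substitution `y ↦ d/(2y)` on `Ioi 0` -/
lemma glasser_gen (d : ℝ) (hd : 0 < d) (g : ℝ → ℝ) :
    ∫ w in Ioi (0:ℝ), g w = ∫ y in Ioi (0:ℝ), (d/(2*y^2)) * g (d/(2*y)) := by
  have hchi_img : (fun y : ℝ => d/(2*y)) '' Ioi 0 = Ioi 0 := by
    ext w; simp only [mem_image, mem_Ioi]
    constructor
    · rintro ⟨y, hy, rfl⟩; positivity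
    · intro hw; exact ⟨d/(2*w), by positivity, by field_simp⟩
  have him := integral_image_eq_integral_abs_deriv_smul (s := Ioi (0:ℝ))
    (f := fun y : ℝ => d/(2*y)) (f' := fun y : ℝ => -(d/(2*y^2)))
    measurableSet_Ioi
    (fun y hy => (chi_deriv d y (mem_Ioi.1 hy)).hasDerivWithinAt)
    (fun a ha b hb hab => by
      have ha' := mem_Ioi.1 ha; have hb' := mem_Ioi.1 hb
      have h2 : d * (2*b) = d * (2*a) := by
        rw [div_eq_div_iff (by positivity) (by positivity)] at hab
        linarith
      have := mul_left_cancel₀ (ne_of_gt hd) h2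
      linarith)
    g
  rw [hchi_img] at him
  rw [him]
  refine setIntegral_congr_fun measurableSet_Ioi (fun y hy => ?_)
  have hy' := mem_Ioi.1 hy
  rw [smul_eq_mul, abs_neg, abs_of_pos (by positivity)]

lemma glasser32 (c : ℝ) (hc : 0 < c) :
    ∫ w in Ioi (0:ℝ), Real.exp (-w - c^2/(4*w)) * w ^ (-(3:ℝ)/2)
      = 2/c * (Real.sqrt π * Real.exp (-c)) := by
  have hd : (0:ℝ) < c^2/2 := by positivity
  rw [glasser_gen (c^2/2) hd (fun w => Real.exp (-w - c^2/(4*w)) * w ^ (-(3:ℝ)/2))]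
  rw [← glasser c hc, ← integral_const_mul]
  refine setIntegral_congr_fun measurableSet_Ioi (fun y hy => ?_)
  have hy' := mem_Ioi.1 hy
  set r := Real.sqrt y with hrdef
  have hr : 0 < r := Real.sqrt_pos.2 hy'
  have hr2 : r^2 = y := Real.sq_sqrt (le_of_lt hy')
  have e1 : (c^2/2)/(2*y) = c^2/(4*y) := by ring
  have e2 : c^2/(4*(c^2/(4*y))) = y := by field_simp
  have e3 : c^2/(4*y) = (c/(2*r))^2 := by
    rw [← hr2]; field_simp; ring
  have e4 : ((c^2/(4*y)) : ℝ) ^ (-(3:ℝ)/2) = ((c/(2*r))^3)⁻¹ := by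
    rw [e3, ← Real.rpow_natCast (c/(2*r)) 2, ← Real.rpow_mul (by positivity)]
    rw [show ((2:ℕ):ℝ) * (-(3:ℝ)/2) = -(3:ℝ) by norm_num]
    rw [Real.rpow_neg (by positivity)]
    norm_cast
  have e5 : (y:ℝ) ^ (-(1:ℝ)/2) = r⁻¹ := by
    rw [← hr2, ← Real.rpow_natCast r 2, ← Real.rpow_mul (le_of_lt hr)]
    norm_num [Real.rpow_neg_one]
  simp only [e1, e2, e4, e5]
  have hy0 : y ≠ 0 := ne_of_gt hy'
  rw [← hr2]
  field_simp
  ring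

lemma int_exp_w (b p : ℝ) (hb : 0 < b) (hp : -2 < p) :
    IntegrableOn (fun w : ℝ => Real.exp (-w - b/w) * w ^ p) (Ioi 0) := by
  have hcont : ContinuousOn (fun w : ℝ => Real.exp (-w - b/w) * w ^ p) (Ioi 0) := by
    apply ContinuousOn.mul
    · exact (Real.continuous_exp.comp_continuousOn
        ((continuousOn_id.neg).sub (continuousOn_const.div continuousOn_id
          (fun x hx => ne_of_gt (mem_Ioi.1 hx)))))
    · exact ContinuousOn.rpow_const continuousOn_id
        (fun x hx => Or.inl (ne_of_gt (mem_Ioi.1 hx)))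
  refine Integrable.mono'
    (((Real.GammaIntegral_convergent (s := p + 3) (by linarith)).const_mul (4/b^2))) ?_ ?_
  · exact hcont.aestronglyMeasurable measurableSet_Ioi
  · filter_upwards [ae_restrict_mem measurableSet_Ioi] with w hw
    have hw' := mem_Ioi.1 hw
    rw [Real.norm_eq_abs, abs_of_pos (by positivity)]
    have hkey : Real.exp (-(b/w)) ≤ 4*w^2/b^2 := by
      have h1 : (b/w)/2 ≤ Real.exp ((b/w)/2) := by
        have := Real.add_one_le_exp ((b/w)/2); linarith
      have h2 : ((b/w)/2)^2 ≤ (Real.exp ((b/w)/2))^2 := by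
        have hbw : (0:ℝ) ≤ (b/w)/2 := by positivity
        nlinarith [Real.exp_pos ((b/w)/2)]
      have hexp2 : (Real.exp ((b/w)/2))^2 = Real.exp (b/w) := by
        rw [sq, ← Real.exp_add]
        congr 1; ring
      have h3 : b^2/(4*w^2) ≤ Real.exp (b/w) := by
        calc b^2/(4*w^2) = ((b/w)/2)^2 := by field_simp; ring
        _ ≤ Real.exp (b/w) := by rw [← hexp2]; exact h2
      rw [Real.exp_neg]
      rw [inv_le_comm₀ (Real.exp_pos _) (by positivity)]
      calc (4*w^2/b^2)⁻¹ = b^2/(4*w^2) := by rw [inv_div]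
      _ ≤ Real.exp (b/w) := h3
    have hsplit : Real.exp (-w - b/w) = Real.exp (-w) * Real.exp (-(b/w)) := by
      rw [← Real.exp_add]; ring_nf
    rw [hsplit]
    have hpow : w ^ p * w^2 = w ^ (p + 3 - 1) := by
      rw [show p + 3 - 1 = p + 2 by ring, Real.rpow_add hw', Real.rpow_two]
    calc Real.exp (-w) * Real.exp (-(b/w)) * w ^ p
        ≤ Real.exp (-w) * (4*w^2/b^2) * w ^ p := by
          apply mul_le_mul_of_nonneg_right ?_ (by positivity)
          exact mul_le_mul_of_nonneg_left hkey (le_of_lt (Real.exp_pos _))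
      _ = 4/b^2 * (Real.exp (-w) * w ^ (p + 3 - 1)) := by
          rw [← hpow]; ring



lemma cosh_ge (t : ℝ) : 1 + t^2/2 ≤ Real.cosh t := by
  have h2 := Real.cosh_two_mul (t/2)
  rw [show 2*(t/2) = t by ring] at h2
  have h3 : Real.cosh (t/2)^2 = Real.sinh (t/2)^2 + 1 := Real.cosh_sq _
  have key : ∀ u : ℝ, 0 ≤ u → u ≤ Real.sinh u := by
    intro u hu
    rcases eq_or_lt_of_le hu with h | h
    · rw [← h]; simp
    · exact le_of_lt (Real.self_lt_sinh_iff.2 h)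
  have h4 : (t/2)^2 ≤ Real.sinh (t/2)^2 := by
    rcases le_or_gt 0 (t/2) with h | h
    · nlinarith [key (t/2) h]
    · have hneg := key (-(t/2)) (by linarith)
      rw [Real.sinh_neg] at hneg
      nlinarith
  linarith

lemma int_exp_cosh (ν x : ℝ) (hx : 0 < x) :
    Integrable (fun t : ℝ => Real.exp (ν*t - x * Real.cosh t)) := by
  have hg : Integrable (fun t : ℝ =>
      Real.exp (ν^2/(2*x) - x) * Real.exp (-(x/2) * (t - ν/x)^2)) :=
    ((integrable_exp_neg_mul_sq (by positivity : (0:ℝ) < x/2)).comp_sub_right (ν/x)).const_mul _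
  refine hg.mono' ?_ ?_
  · exact (Real.continuous_exp.comp
      ((continuous_const.mul continuous_id).sub
        (continuous_const.mul Real.continuous_cosh))).aestronglyMeasurable
  · refine Filter.Eventually.of_forall (fun t => ?_)
    rw [Real.norm_eq_abs, abs_of_pos (Real.exp_pos _), ← Real.exp_add]
    apply Real.exp_le_exp.2
    have hc := cosh_ge t
    have hxc : x * (1 + t^2/2) ≤ x * Real.cosh t :=
      mul_le_mul_of_nonneg_left hc (le_of_lt hx)
    have hx0 : x ≠ 0 := ne_of_gt hx
    have : ν^2/(2*x) - x + -(x/2) * (t - ν/x)^2 = ν*t - x*(1 + t^2/2) := by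
      field_simp
      ring
    rw [this]
    linarith

lemma exp_range_img (x : ℝ) (hx : 0 < x) :
    (fun t : ℝ => (x/2) * Real.exp t) '' univ = Ioi 0 := by
  rw [image_univ]
  ext w; simp only [mem_range, mem_Ioi]
  constructor
  · rintro ⟨t, rfl⟩; positivity
  · intro hw
    exact ⟨Real.log (2*w/x), by
      rw [Real.exp_log (by positivity)]
      field_simp⟩

lemma besselK_J (ν x : ℝ) (hx : 0 < x) :
    (∫ w in Ioi (0:ℝ), Real.exp (-w - x^2/(4*w)) * w ^ (ν - 1))
      = (x/2) ^ ν * (2 * besselK ν x) := by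
  have hp : (0:ℝ) < x/2 := by positivity
  have him := integral_image_eq_integral_abs_deriv_smul (s := (univ : Set ℝ))
    (f := fun t : ℝ => (x/2) * Real.exp t) (f' := fun t : ℝ => (x/2) * Real.exp t)
    MeasurableSet.univ
    (fun t _ => ((Real.hasDerivAt_exp t).const_mul (x/2)).hasDerivWithinAt)
    (fun a _ b _ hab => Real.exp_injective (mul_left_cancel₀ (ne_of_gt hp) hab))
    (fun w : ℝ => Real.exp (-w - x^2/(4*w)) * w ^ (ν - 1))
  rw [exp_range_img x hx] at him
  rw [him, setIntegral_univ]
  have hpt : ∀ t : ℝ, |(x/2) * Real.exp t| • (Real.exp (-((x/2) * Real.exp t)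
        - x^2/(4*((x/2) * Real.exp t))) * ((x/2) * Real.exp t) ^ (ν - 1))
      = (x/2) ^ ν * Real.exp (ν*t - x * Real.cosh t) := by
    intro t
    have he : (0:ℝ) < Real.exp t := Real.exp_pos t
    have h1 : ((x/2) * Real.exp t) ^ (ν-1) = (x/2)^(ν-1) * Real.exp (t*(ν-1)) := by
      rw [Real.mul_rpow (le_of_lt hp) (le_of_lt he), ← Real.exp_mul]
    have h2 : -((x/2) * Real.exp t) - x^2/(4*((x/2) * Real.exp t))
        = -(x * Real.cosh t) := by
      have hdiv : x^2/(4*((x/2) * Real.exp t)) = (x/2) * (Real.exp t)⁻¹ := by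
        field_simp
        ring
      rw [hdiv, Real.cosh_eq, Real.exp_neg]
      field_simp
      ring
    rw [smul_eq_mul, abs_of_pos (by positivity), h1, h2]
    have h3 : (x/2) * (x/2)^(ν-1) = (x/2)^ν := by
      have h := Real.rpow_add hp 1 (ν-1)
      rw [Real.rpow_one] at h
      rw [show (1:ℝ)+(ν-1) = ν by ring] at h
      exact h.symm
    have h4 : Real.exp t * Real.exp (t*(ν-1)) = Real.exp (ν*t) := by
      rw [← Real.exp_add]; congr 1; ring
    have h5 : Real.exp (ν*t - x * Real.cosh t)
        = Real.exp (ν*t) * Real.exp (-(x * Real.cosh t)) := by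
      rw [← Real.exp_add, sub_eq_add_neg]
    rw [h5, ← h3, ← h4]
    ring
  rw [show (fun t : ℝ => |(x/2) * Real.exp t| • (Real.exp (-((x/2) * Real.exp t)
        - x^2/(4*((x/2) * Real.exp t))) * ((x/2) * Real.exp t) ^ (ν - 1)))
      = fun t : ℝ => (x/2) ^ ν * Real.exp (ν*t - x * Real.cosh t) from funext hpt]
  rw [integral_const_mul]
  congr 1
  -- ∫ ℝ = 2 * besselK
  have hint := int_exp_cosh ν x hx
  have hint' := int_exp_cosh (-ν) x hx
  rw [← integral_add_compl (measurableSet_Iic (a := (0:ℝ))) hint, compl_Iic]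
  have hIic : (∫ t in Iic (0:ℝ), Real.exp (ν*t - x * Real.cosh t))
      = ∫ t in Ioi (0:ℝ), Real.exp (-ν*t - x * Real.cosh t) := by
    have h := integral_comp_neg_Iic (0:ℝ) (fun s => Real.exp (-ν*s - x * Real.cosh s))
    simp only [neg_zero] at h
    rw [← h]
    refine setIntegral_congr_fun measurableSet_Iic (fun t ht => ?_)
    simp only [Real.cosh_neg]
    congr 1
    ring
  rw [hIic, ← integral_add (hint'.integrableOn) (hint.integrableOn)]
  rw [besselK, ← integral_const_mul]
  refine setIntegral_congr_fun measurableSet_Ioi (fun t ht => ?_)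
  rw [show Real.cosh (ν*t) = (Real.exp (ν*t) + Real.exp (-(ν*t)))/2 from Real.cosh_eq (ν*t)]
  have e1 : Real.exp (-ν*t - x * Real.cosh t)
      = Real.exp (-x * Real.cosh t) * Real.exp (-(ν*t)) := by
    rw [← Real.exp_add]; congr 1; ring
  have e2 : Real.exp (ν*t - x * Real.cosh t)
      = Real.exp (-x * Real.cosh t) * Real.exp (ν*t) := by
    rw [← Real.exp_add]; congr 1; ring
  rw [e1, e2]
  ring


section
variable (α x : ℝ)

lemma int_I (hα : 1/2 < α) (hx : 0 < x) :
    IntegrableOn (fun s : ℝ => (s^2-1)^(α-1) * Real.exp (-(x*s))) (Ioi 1) := by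
  have hcont : ∀ T : Set ℝ, T ⊆ Ioi 1 →
      ContinuousOn (fun s : ℝ => (s^2-1)^(α-1) * Real.exp (-(x*s))) T := by
    intro T hT
    apply ContinuousOn.mul
    · apply ContinuousOn.rpow_const ((continuousOn_id.pow 2).sub continuousOn_const)
      intro s hs
      have : (1:ℝ) < s := hT hs
      exact Or.inl (ne_of_gt (show (0:ℝ) < id s ^ 2 - 1 by simp only [id]; nlinarith))
    · exact (Real.continuous_exp.comp (continuous_const.mul continuous_id).neg).continuousOn
  rw [← Ioc_union_Ioi_eq_Ioi (le_of_lt one_lt_two), integrableOn_union]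
  constructor
  · -- Ioc 1 2
    have hbase : IntegrableOn (fun s : ℝ => (s-1)^(α-1)) (Ioc 1 2) := by
      have h0 := intervalIntegral.intervalIntegrable_rpow' (a := (0:ℝ)) (b := 1)
        (show (-1:ℝ) < α-1 by linarith)
      have h1 := h0.comp_sub_right 1
      rw [intervalIntegrable_iff_integrableOn_Ioc_of_le (by norm_num)] at h1
      norm_num at h1
      exact h1
    set C : ℝ := (2:ℝ)^(α-1) + 3^(α-1) with hC
    refine Integrable.mono' (hbase.const_mul C) ?_ ?_
    · exact (hcont (Ioc 1 2) Ioc_subset_Ioi_self).aestronglyMeasurable measurableSet_Ioc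
    · filter_upwards [ae_restrict_mem measurableSet_Ioc] with s hs
      obtain ⟨hs1, hs2⟩ := hs
      have hsub : (0:ℝ) < s - 1 := by linarith
      have hadd : (0:ℝ) < s + 1 := by linarith
      have hsq : (0:ℝ) < s^2 - 1 := by nlinarith
      rw [Real.norm_eq_abs, abs_of_pos (by positivity)]
      have hsplit : (s^2-1)^(α-1) = (s-1)^(α-1) * (s+1)^(α-1) := by
        rw [show s^2-1 = (s-1)*(s+1) by ring, Real.mul_rpow (le_of_lt hsub) (le_of_lt hadd)]
      have hbound : (s+1)^(α-1) ≤ C := by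
        rcases le_or_gt 1 α with h | h
        · have h3 : (s+1)^(α-1) ≤ 3^(α-1) :=
            Real.rpow_le_rpow (le_of_lt hadd) (by linarith) (by linarith)
          have h2 : (0:ℝ) < (2:ℝ)^(α-1) := Real.rpow_pos_of_pos two_pos _
          rw [hC]; linarith
        · have h2 : (s+1)^(α-1) ≤ 2^(α-1) := by
            rw [show α-1 = -(1-α) by ring, Real.rpow_neg (le_of_lt hadd),
              Real.rpow_neg (by norm_num : (0:ℝ) ≤ 2)]
            apply inv_anti₀ (Real.rpow_pos_of_pos two_pos _)
            exact Real.rpow_le_rpow (by norm_num) (by linarith) (by linarith)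
          have h3 : (0:ℝ) < (3:ℝ)^(α-1) := Real.rpow_pos_of_pos (by norm_num) _
          rw [hC]; linarith
      have hexp : Real.exp (-(x*s)) ≤ 1 := by
        rw [Real.exp_le_one_iff]
        nlinarith
      calc (s^2-1)^(α-1) * Real.exp (-(x*s))
          ≤ (s^2-1)^(α-1) * 1 := by
            apply mul_le_mul_of_nonneg_left hexp (by positivity)
        _ = (s-1)^(α-1) * (s+1)^(α-1) := by rw [mul_one, hsplit]
        _ ≤ C * (s-1)^(α-1) := by
            rw [mul_comm]
            apply mul_le_mul_of_nonneg_right hbound (by positivity)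
  · -- Ioi 2
    have hbase : IntegrableOn (fun s : ℝ => s^(2*α) * Real.exp (-(x*s))) (Ioi 2) := by
      have h := integrableOn_rpow_mul_exp_neg_mul_rpow (s := 2*α) (p := 1)
        (by linarith) one_pos hx
      simp only [Real.rpow_one, neg_mul] at h
      exact h.mono_set (fun y hy => lt_trans two_pos (mem_Ioi.1 hy))
    refine Integrable.mono' hbase ?_ ?_
    · exact (hcont (Ioi 2) (fun y hy => lt_trans one_lt_two (mem_Ioi.1 hy))).aestronglyMeasurable
        measurableSet_Ioi
    · filter_upwards [ae_restrict_mem measurableSet_Ioi] with s hs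
      have hs2 := mem_Ioi.1 hs
      have hsq : (0:ℝ) < s^2 - 1 := by nlinarith
      rw [Real.norm_eq_abs, abs_of_pos (by positivity)]
      have hbound : (s^2-1)^(α-1) ≤ s^(2*α) := by
        rcases le_or_gt 1 α with h | h
        · calc (s^2-1)^(α-1) ≤ (s^2)^(α-1) :=
              Real.rpow_le_rpow (le_of_lt hsq) (by nlinarith) (by linarith)
          _ = s^(2*(α-1)) := by
              rw [← Real.rpow_natCast s 2, ← Real.rpow_mul (by linarith)]
              norm_num
          _ ≤ s^(2*α) := Real.rpow_le_rpow_of_exponent_le (by linarith) (by linarith)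
        · have hone : (s^2-1)^(α-1) ≤ 1 :=
            Real.rpow_le_one_of_one_le_of_nonpos (by nlinarith) (by linarith)
          have htwo : (1:ℝ) ≤ s^(2*α) := by
            rw [← Real.one_rpow (2*α)]
            exact Real.rpow_le_rpow (by norm_num) (by linarith) (by positivity)
          linarith
      exact mul_le_mul_of_nonneg_right hbound (le_of_lt (Real.exp_pos (-(x*s))))

lemma inner_gamma (a : ℝ) (hα : 0 < α) (ha : 0 < a) :
    ∫ s in Ioi (1:ℝ), s * ((s^2-1)^(α-1) * Real.exp (-(a*(s^2-1))))
      = (1/2) * ((1/a)^α * Real.Gamma α) := by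
  have himg : (fun s : ℝ => s^2 - 1) '' Ioi 1 = Ioi 0 := by
    ext q; simp only [mem_image, mem_Ioi]
    constructor
    · rintro ⟨s, hs, rfl⟩; nlinarith
    · intro hq
      refine ⟨Real.sqrt (1+q), ?_, ?_⟩
      · have h1 : (1:ℝ) < 1 + q := by linarith
        have := Real.lt_sqrt (by norm_num : (0:ℝ) ≤ 1) (x := 1) (y := 1+q)
        rw [Real.lt_sqrt (by norm_num)]
        norm_num
        exact hq
      · rw [Real.sq_sqrt (by linarith)]; ring
  have hinj : InjOn (fun s : ℝ => s^2 - 1) (Ioi 1) := by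
    intro p hp q hq hpq
    have hp' := mem_Ioi.1 hp; have hq' := mem_Ioi.1 hq
    simp only at hpq
    nlinarith [sq_nonneg (p - q), sq_nonneg (p + q)]
  have him := integral_image_eq_integral_abs_deriv_smul (s := Ioi (1:ℝ))
    (f := fun s : ℝ => s^2 - 1) (f' := fun s : ℝ => 2*s)
    measurableSet_Ioi
    (fun s hs => by
      have h := ((hasDerivAt_pow 2 s).sub_const 1)
      simpa using h.hasDerivWithinAt)
    hinj
    (fun q : ℝ => q^(α-1) * Real.exp (-(a*q)))
  rw [himg] at him
  rw [Real.integral_rpow_mul_exp_neg_mul_Ioi hα ha] at him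
  have hpt : ∀ s ∈ Ioi (1:ℝ), |2*s| • ((s^2-1)^(α-1) * Real.exp (-(a*(s^2-1))))
      = 2 * (s * ((s^2-1)^(α-1) * Real.exp (-(a*(s^2-1))))) := by
    intro s hs
    have hs' := mem_Ioi.1 hs
    rw [smul_eq_mul, abs_of_pos (by positivity)]
    ring
  rw [setIntegral_congr_fun measurableSet_Ioi hpt, integral_const_mul] at him
  linarith
end


lemma I_eq (α x : ℝ) (hα : 1/2 < α) (hx : 0 < x) :
    ∫ s in Ioi (1:ℝ), (s^2-1)^(α-1) * Real.exp (-(x*s))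
      = Real.Gamma α / (4 * Real.sqrt π) * (4/x^2)^α * x *
        ∫ w in Ioi (0:ℝ), Real.exp (-w - x^2/(4*w)) * w ^ ((α - 1/2) - 1) := by
  have hα0 : 0 < α := by linarith
  have hsπ : 0 < Real.sqrt π := Real.sqrt_pos.2 Real.pi_pos
  set G : ℝ → ℝ → ℝ := fun s w => (s^2-1)^(α-1) * (x*s/(2*Real.sqrt π)) *
    (Real.exp (-w - (x*s)^2/(4*w)) * w ^ (-(3:ℝ)/2)) with hG
  have step1 : ∀ s ∈ Ioi (1:ℝ), (∫ w in Ioi (0:ℝ), G s w)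
      = (s^2-1)^(α-1) * Real.exp (-(x*s)) := by
    intro s hs
    have hs' := mem_Ioi.1 hs
    have hxs : 0 < x*s := by positivity
    rw [hG]
    simp only
    rw [integral_const_mul, glasser32 (x*s) hxs]
    have hsq : (0:ℝ) < s^2 - 1 := by nlinarith
    field_simp
  have hslice : ∀ s ∈ Ioi (1:ℝ), Integrable (fun w => G s w) (volume.restrict (Ioi 0)) := by
    intro s hs
    have hs' := mem_Ioi.1 hs
    have hb : 0 < (x*s)^2/4 := by positivity
    have h := (int_exp_w ((x*s)^2/4) (-(3:ℝ)/2) hb (by norm_num)).const_mul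
      ((s^2-1)^(α-1) * (x*s/(2*Real.sqrt π)))
    simpa [hG, div_div] using h
  have hmeasG : AEStronglyMeasurable (fun p : ℝ×ℝ => G p.1 p.2)
      ((volume.restrict (Ioi 1)).prod (volume.restrict (Ioi 0))) := by
    rw [Measure.prod_restrict]
    apply ContinuousOn.aestronglyMeasurable ?_ (measurableSet_Ioi.prod measurableSet_Ioi)
    apply ContinuousOn.mul
    · apply ContinuousOn.mul
      · apply ContinuousOn.rpow_const (((continuous_fst.pow 2).sub continuous_const).continuousOn)
        rintro ⟨s,w⟩ hp
        have h1 : (1:ℝ) < s := hp.1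
        exact Or.inl (ne_of_gt (show (0:ℝ) < s^2 - 1 by nlinarith))
      · exact ((continuous_const.mul continuous_fst).div_const _).continuousOn
    · apply ContinuousOn.mul
      · apply Real.continuous_exp.comp_continuousOn
        apply ContinuousOn.sub continuous_snd.neg.continuousOn
        apply ContinuousOn.div ((continuous_const.mul continuous_fst).pow 2).continuousOn
          (continuous_const.mul continuous_snd).continuousOn
        rintro ⟨s,w⟩ hp
        have h2 : (0:ℝ) < w := hp.2
        exact ne_of_gt (show (0:ℝ) < 4*w by positivity)
      · apply ContinuousOn.rpow_const continuous_snd.continuousOn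
        rintro ⟨s,w⟩ hp
        exact Or.inl (ne_of_gt hp.2)
  have hGnonneg : ∀ s ∈ Ioi (1:ℝ), ∀ w ∈ Ioi (0:ℝ), 0 ≤ G s w := by
    intro s hs w hw
    have hs' := mem_Ioi.1 hs; have hw' := mem_Ioi.1 hw
    have hsq : (0:ℝ) < s^2 - 1 := by nlinarith
    rw [hG]
    have h1 : (0:ℝ) < (s^2-1)^(α-1) := Real.rpow_pos_of_pos hsq _
    have h2 : (0:ℝ) < w ^ (-(3:ℝ)/2) := Real.rpow_pos_of_pos hw' _
    positivity
  have hnorm : ∀ s ∈ Ioi (1:ℝ), (∫ w in Ioi (0:ℝ), ‖G s w‖)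
      = (s^2-1)^(α-1) * Real.exp (-(x*s)) := by
    intro s hs
    rw [← step1 s hs]
    refine setIntegral_congr_fun measurableSet_Ioi (fun w hw => ?_)
    rw [Real.norm_eq_abs, abs_of_nonneg (hGnonneg s hs w hw)]
  have hInt : Integrable (fun p : ℝ×ℝ => G p.1 p.2)
      ((volume.restrict (Ioi 1)).prod (volume.restrict (Ioi 0))) := by
    rw [integrable_prod_iff hmeasG]
    constructor
    · filter_upwards [ae_restrict_mem measurableSet_Ioi] with s hs
      exact hslice s hs
    · refine (int_I α x hα hx).congr ?_
      filter_upwards [ae_restrict_mem measurableSet_Ioi] with s hs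
      exact (hnorm s hs).symm
  have hswap := integral_integral_swap (f := G) (by exact hInt)
  have step3 : ∀ w ∈ Ioi (0:ℝ), (∫ s in Ioi (1:ℝ), G s w)
      = Real.Gamma α / (4 * Real.sqrt π) * (4/x^2)^α * x *
        (Real.exp (-w - x^2/(4*w)) * w ^ ((α - 1/2) - 1)) := by
    intro w hw
    have hw' := mem_Ioi.1 hw
    set a : ℝ := x^2/(4*w) with hadef
    have ha : 0 < a := by rw [hadef]; positivity
    have hsplit : ∀ s : ℝ, G s w
        = (x/(2*Real.sqrt π) * (Real.exp (-w - x^2/(4*w)) * w ^ (-(3:ℝ)/2)))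
          * (s * ((s^2-1)^(α-1) * Real.exp (-(a*(s^2-1))))) := by
      intro s
      rw [hG]
      simp only
      have hexp : Real.exp (-w - (x*s)^2/(4*w))
          = Real.exp (-w - x^2/(4*w)) * Real.exp (-(a*(s^2-1))) := by
        rw [← Real.exp_add]
        congr 1
        rw [hadef]
        field_simp
        ring
      rw [hexp]
      ring
    rw [show (fun s => G s w) = fun s : ℝ =>
        (x/(2*Real.sqrt π) * (Real.exp (-w - x^2/(4*w)) * w ^ (-(3:ℝ)/2)))
          * (s * ((s^2-1)^(α-1) * Real.exp (-(a*(s^2-1))))) from funext hsplit]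
    rw [integral_const_mul, inner_gamma α a hα0 ha]
    have hia : (1/a)^α = (4/x^2)^α * w^α := by
      rw [hadef, show 1/(x^2/(4*w)) = (4/x^2)*w by rw [one_div, inv_div]; ring,
        Real.mul_rpow (by positivity) (le_of_lt hw')]
    rw [hia]
    have hw32 : w ^ (-(3:ℝ)/2) * w^α = w ^ ((α - 1/2) - 1) := by
      rw [← Real.rpow_add hw']
      congr 1
      ring
    rw [← hw32]
    ring
  calc ∫ s in Ioi (1:ℝ), (s^2-1)^(α-1) * Real.exp (-(x*s))
      = ∫ s in Ioi (1:ℝ), ∫ w in Ioi (0:ℝ), G s w :=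
        (setIntegral_congr_fun measurableSet_Ioi (fun s hs => (step1 s hs).symm))
    _ = ∫ w in Ioi (0:ℝ), ∫ s in Ioi (1:ℝ), G s w := hswap
    _ = ∫ w in Ioi (0:ℝ), Real.Gamma α / (4 * Real.sqrt π) * (4/x^2)^α * x *
          (Real.exp (-w - x^2/(4*w)) * w ^ ((α - 1/2) - 1)) :=
        setIntegral_congr_fun measurableSet_Ioi step3
    _ = Real.Gamma α / (4 * Real.sqrt π) * (4/x^2)^α * x *
          ∫ w in Ioi (0:ℝ), Real.exp (-w - x^2/(4*w)) * w ^ ((α - 1/2) - 1) :=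
        integral_const_mul _ _

lemma const_id (lam τ α : ℝ) (hlam : 0 < lam) (hτ : 0 < τ) :
    (τ/2) * ((τ/2)^(α-1) * (τ/2)^(α-1)) *
      (Real.Gamma α / (4*Real.sqrt π) * (4/(lam*τ)^2)^α * (lam*τ) * ((lam*τ/2)^(α-1/2) * 2))
    = (1/Real.sqrt π) * Real.Gamma α * (τ/(2*lam))^(α-1/2) := by
  have hA : 0 < τ/2 := by positivity
  have hL : 0 < lam*τ/2 := by positivity
  have hπ : 0 < Real.sqrt π := Real.sqrt_pos.2 Real.pi_pos
  have hN : 0 < (lam*τ/2)^(α-1/2) := Real.rpow_pos_of_pos hL _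
  have e1 : (4/(lam*τ)^2)^α
      = ((lam*τ/2)^(α-1/2) * ((lam*τ/2)^(α-1/2) * (lam*τ/2)))⁻¹ := by
    rw [show 4/(lam*τ)^2 = ((lam*τ/2)^(2:ℕ))⁻¹ by field_simp; ring]
    have h2 : ((lam*τ/2)^(2:ℕ))⁻¹ = (lam*τ/2) ^ (-2:ℝ) := by
      rw [Real.rpow_neg (le_of_lt hL), show (2:ℝ) = ((2:ℕ):ℝ) by norm_num,
        Real.rpow_natCast]
    rw [h2, ← Real.rpow_mul (le_of_lt hL)]
    rw [show (-2:ℝ)*α = -((α-1/2) + ((α-1/2) + 1)) by ring]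
    rw [Real.rpow_neg (le_of_lt hL), Real.rpow_add hL, Real.rpow_add hL, Real.rpow_one]
  have e2 : (τ/(2*lam))^(α-1/2)
      = ((τ/2)^(α-1) * (τ/2)^(α-1) * (τ/2)) / (lam*τ/2)^(α-1/2) := by
    rw [show τ/(2*lam) = (τ/2)^(2:ℕ)/(lam*τ/2) by field_simp]
    rw [Real.div_rpow (by positivity) (le_of_lt hL)]
    congr 1
    rw [← Real.rpow_natCast (τ/2) 2, ← Real.rpow_mul (le_of_lt hA)]
    rw [show ((2:ℕ):ℝ)*(α-1/2) = (α-1)+((α-1)+1) by push_cast; ring]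
    rw [Real.rpow_add hA, Real.rpow_add hA, Real.rpow_one]
    ring
  rw [e1, e2]
  field_simp
  ring

theorem stmt0 (lam α τ : ℝ) (hlam : 0 < lam) (hα : 1/2 < α) (hτ : 0 < τ) :
    ∫ u in Set.Ioi (0 : ℝ),
        Real.exp (-2 * lam * u) * u ^ (α - 1) * (τ + u) ^ (α - 1)
      = (1 / Real.sqrt π) * Real.Gamma α * (τ / (2 * lam)) ^ (α - 1/2) *
          Real.exp (lam * τ) * besselK (α - 1/2) (lam * τ) := by
  have hA : 0 < τ/2 := by positivity
  have hx : 0 < lam*τ := by positivity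
  have himg : (fun s : ℝ => (τ/2)*(s-1)) '' Ioi 1 = Ioi 0 := by
    ext u; simp only [mem_image, mem_Ioi]
    constructor
    · rintro ⟨s, hs, rfl⟩
      have : 0 < s - 1 := by linarith
      positivity
    · intro hu
      refine ⟨2*u/τ + 1, by
        have h0 : 0 < 2*u/τ := by positivity
        linarith, by field_simp; ring⟩
  have him := integral_image_eq_integral_abs_deriv_smul (s := Ioi (1:ℝ))
    (f := fun s : ℝ => (τ/2)*(s-1)) (f' := fun _ : ℝ => τ/2)
    measurableSet_Ioi
    (fun s hs => by
      have h := ((hasDerivAt_id s).sub_const 1).const_mul (τ/2)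
      simpa using h.hasDerivWithinAt)
    (fun a _ b _ hab => by
      have := mul_left_cancel₀ (ne_of_gt hA) hab
      linarith)
    (fun u : ℝ => Real.exp (-2 * lam * u) * u ^ (α - 1) * (τ + u) ^ (α - 1))
  rw [himg] at him
  rw [him]
  have hpt : ∀ s ∈ Ioi (1:ℝ),
      |τ/2| • (Real.exp (-2*lam*((τ/2)*(s-1))) * ((τ/2)*(s-1))^(α-1)
        * (τ + (τ/2)*(s-1))^(α-1))
      = ((τ/2) * Real.exp (lam*τ) * ((τ/2)^(α-1) * (τ/2)^(α-1)))
          * ((s^2-1)^(α-1) * Real.exp (-(lam*τ*s))) := by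
    intro s hs
    have hs' := mem_Ioi.1 hs
    have hs1 : (0:ℝ) < s - 1 := by linarith
    have hs2 : (0:ℝ) < s + 1 := by linarith
    rw [smul_eq_mul, abs_of_pos hA]
    have h1 : Real.exp (-2*lam*((τ/2)*(s-1)))
        = Real.exp (lam*τ) * Real.exp (-(lam*τ*s)) := by
      rw [← Real.exp_add]; congr 1; field_simp; ring
    have h2 : ((τ/2)*(s-1))^(α-1) = (τ/2)^(α-1) * (s-1)^(α-1) :=
      Real.mul_rpow (le_of_lt hA) (le_of_lt hs1)
    have h3 : τ + (τ/2)*(s-1) = (τ/2)*(s+1) := by ring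
    have h4 : ((τ/2)*(s+1))^(α-1) = (τ/2)^(α-1) * (s+1)^(α-1) :=
      Real.mul_rpow (le_of_lt hA) (le_of_lt hs2)
    have h5 : (s-1)^(α-1) * (s+1)^(α-1) = (s^2-1)^(α-1) := by
      rw [← Real.mul_rpow (le_of_lt hs1) (le_of_lt hs2),
        show (s-1)*(s+1) = s^2-1 by ring]
    rw [h1, h2, h3, h4, ← h5]
    ring
  rw [setIntegral_congr_fun measurableSet_Ioi hpt, integral_const_mul]
  have hIeq := I_eq α (lam*τ) hα hx
  have hIeq' : (∫ s in Ioi (1:ℝ), (s^2-1)^(α-1) * Real.exp (-(lam*τ*s)))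
      = Real.Gamma α / (4 * Real.sqrt π) * (4/(lam*τ)^2)^α * (lam*τ) *
        ((lam*τ/2) ^ (α-1/2) * (2 * besselK (α-1/2) (lam*τ))) := by
    rw [hIeq, besselK_J (α-1/2) (lam*τ) hx]
  rw [hIeq']
  linear_combination (Real.exp (lam*τ) * besselK (α-1/2) (lam*τ)) * const_id lam τ α hlam hτ
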